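/- Let Q = [−1/2,1/2]² and for k = 1,2 let w_k(x,y) = α_k + β_k x + γ_k y + δ_k xy and v_k(x,y) = α_k + β_k x + γ_k y with real coefficients α_k, β_k, γ_k, δ_k. Setting w = (w₁,w₂) and v = (v₁,v₂), we have ∫_Q [|∇w|² − (div w)² − (curl w)²] dxdy = ∫_Q [|∇v|² − (div v)² − (curl v)²] dxdy. -/

import Mathlib

open MeasureTheory

/-- The centered unit square `Q = [−1/2, 1/2]²`. -/
def centeredSq : Set (ℝ × ℝ) :=
  Set.Icc (-(1 : ℝ) / 2) (1 / 2) ×ˢ Set.Icc (-(1 : ℝ) / 2) (1 / 2)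

/-- The integrand `|∇u|² − (div u)² − (curl u)²` for a vector field `u = (u₁,u₂)` on `ℝ²`,
where `|∇u|² = (∂₁u₁)² + (∂₂u₁)² + (∂₁u₂)² + (∂₂u₂)²`, `div u = ∂₁u₁ + ∂₂u₂` and
`curl u = ∂₁u₂ − ∂₂u₁`. -/
noncomputable def gradMinusDivCurl (u₁ u₂ : ℝ × ℝ → ℝ) (x : ℝ × ℝ) : ℝ :=
  (fderiv ℝ u₁ x (1, 0)) ^ 2 + (fderiv ℝ u₁ x (0, 1)) ^ 2 +
    (fderiv ℝ u₂ x (1, 0)) ^ 2 + (fderiv ℝ u₂ x (0, 1)) ^ 2 -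
    (fderiv ℝ u₁ x (1, 0) + fderiv ℝ u₂ x (0, 1)) ^ 2 -
    (fderiv ℝ u₂ x (1, 0) - fderiv ℝ u₁ x (0, 1)) ^ 2

lemma poly_fderiv (α β γ δ : ℝ) (x v : ℝ × ℝ) :
    fderiv ℝ (fun p : ℝ × ℝ => α + β * p.1 + γ * p.2 + δ * (p.1 * p.2)) x v =
      β * v.1 + γ * v.2 + δ * (x.2 * v.1 + x.1 * v.2) := by
  have h : HasFDerivAt (fun p : ℝ × ℝ => α + β * p.1 + γ * p.2 + δ * (p.1 * p.2)) _ x :=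
    (((hasFDerivAt_const α x).add ((hasFDerivAt_fst (𝕜 := ℝ) (p := x)).const_mul β)).add
      ((hasFDerivAt_snd (𝕜 := ℝ) (p := x)).const_mul γ)).add
      (((hasFDerivAt_fst (𝕜 := ℝ) (p := x)).mul (hasFDerivAt_snd (𝕜 := ℝ) (p := x))).const_mul δ)
  rw [h.fderiv]; simp; ring

lemma affine_fderiv (α β γ : ℝ) (x v : ℝ × ℝ) :
    fderiv ℝ (fun p : ℝ × ℝ => α + β * p.1 + γ * p.2) x v = β * v.1 + γ * v.2 := by
  have h : HasFDerivAt (fun p : ℝ × ℝ => α + β * p.1 + γ * p.2) _ x :=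
    ((hasFDerivAt_const α x).add ((hasFDerivAt_fst (𝕜 := ℝ) (p := x)).const_mul β)).add
      ((hasFDerivAt_snd (𝕜 := ℝ) (p := x)).const_mul γ)
  rw [h.fderiv]; simp

lemma int_id_zero : ∫ t in Set.Icc (-(1 : ℝ) / 2) (1 / 2), t = 0 := by
  rw [MeasureTheory.integral_Icc_eq_integral_Ioc,
    ← intervalIntegral.integral_of_le (by norm_num : (-(1:ℝ)/2) ≤ 1/2)]
  simp [integral_id]
  norm_num

lemma int_one : ∫ _ in Set.Icc (-(1 : ℝ) / 2) (1 / 2), (1 : ℝ) = 1 := by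
  simp [Real.volume_Icc]
  norm_num

lemma int_fst_zero : ∫ x in centeredSq, x.1 = 0 := by
  have h := MeasureTheory.setIntegral_prod_mul (μ := (volume : Measure ℝ))
    (ν := (volume : Measure ℝ)) (f := fun t : ℝ => t) (g := fun _ : ℝ => (1 : ℝ))
    (s := Set.Icc (-(1 : ℝ) / 2) (1 / 2)) (t := Set.Icc (-(1 : ℝ) / 2) (1 / 2))
  simp only [mul_one] at h
  rw [centeredSq, MeasureTheory.Measure.volume_eq_prod, h, int_id_zero, zero_mul]

lemma int_snd_zero : ∫ x in centeredSq, x.2 = 0 := by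
  have h := MeasureTheory.setIntegral_prod_mul (μ := (volume : Measure ℝ))
    (ν := (volume : Measure ℝ)) (f := fun _ : ℝ => (1 : ℝ)) (g := fun t : ℝ => t)
    (s := Set.Icc (-(1 : ℝ) / 2) (1 / 2)) (t := Set.Icc (-(1 : ℝ) / 2) (1 / 2))
  simp only [one_mul] at h
  rw [centeredSq, MeasureTheory.Measure.volume_eq_prod, h, int_id_zero, mul_zero]

lemma vol_sq : (volume centeredSq).toReal = 1 := by
  rw [centeredSq, MeasureTheory.Measure.volume_eq_prod, MeasureTheory.Measure.prod_prod,
    Real.volume_Icc]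
  norm_num

theorem bilinear_part_energy_eq (α₁ β₁ γ₁ δ₁ α₂ β₂ γ₂ δ₂ : ℝ) :
    ∫ x in centeredSq,
        gradMinusDivCurl
          (fun p => α₁ + β₁ * p.1 + γ₁ * p.2 + δ₁ * (p.1 * p.2))
          (fun p => α₂ + β₂ * p.1 + γ₂ * p.2 + δ₂ * (p.1 * p.2)) x =
      ∫ x in centeredSq,
        gradMinusDivCurl
          (fun p => α₁ + β₁ * p.1 + γ₁ * p.2)
          (fun p => α₂ + β₂ * p.1 + γ₂ * p.2) x := by
  set C := 2 * (γ₁ * β₂ - β₁ * γ₂) with hC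
  set c₁ := 2 * (δ₁ * β₂ - β₁ * δ₂) with hc₁
  set c₂ := 2 * (γ₁ * δ₂ - δ₁ * γ₂) with hc₂
  have hL : ∀ x : ℝ × ℝ,
      gradMinusDivCurl
        (fun p => α₁ + β₁ * p.1 + γ₁ * p.2 + δ₁ * (p.1 * p.2))
        (fun p => α₂ + β₂ * p.1 + γ₂ * p.2 + δ₂ * (p.1 * p.2)) x
        = C + (c₁ * x.1 + c₂ * x.2) := by
    intro x
    simp only [gradMinusDivCurl, poly_fderiv, hC, hc₁, hc₂]
    ring
  have hR : ∀ x : ℝ × ℝ,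
      gradMinusDivCurl
        (fun p => α₁ + β₁ * p.1 + γ₁ * p.2)
        (fun p => α₂ + β₂ * p.1 + γ₂ * p.2) x = C := by
    intro x
    simp only [gradMinusDivCurl, affine_fderiv, hC]
    ring
  simp only [hL, hR]
  have hcomp : IsCompact centeredSq := (isCompact_Icc).prod isCompact_Icc
  have h1 : IntegrableOn (fun _ : ℝ × ℝ => C) centeredSq volume :=
    (continuous_const.continuousOn).integrableOn_compact hcomp
  have h2 : IntegrableOn (fun x : ℝ × ℝ => c₁ * x.1 + c₂ * x.2) centeredSq volume :=
    ((((continuous_const.mul continuous_fst).add (continuous_const.mul continuous_snd))).continuousOn).integrableOn_compact hcomp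
  rw [MeasureTheory.integral_add h1 h2, MeasureTheory.integral_add
    (((show Continuous (fun a : ℝ × ℝ => c₁ * a.1) from continuous_const.mul continuous_fst)).continuousOn.integrableOn_compact hcomp)
    (((show Continuous (fun a : ℝ × ℝ => c₂ * a.2) from continuous_const.mul continuous_snd)).continuousOn.integrableOn_compact hcomp),
    integral_const_mul c₁ (fun a : ℝ × ℝ => a.1), integral_const_mul c₂ (fun a : ℝ × ℝ => a.2),
    int_fst_zero, int_snd_zero]
  simp
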